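/- Let A ∈ ℝ^{n×n} be symmetric, y ∈ ℝ^n, L ∈ ℝ, β ≥ 0, and for U, Δ ∈ ℝ^{n×r} define the Hessian quadratic form H_U(Δ) := ⟨2(L·I_n + A) + y1_nᵀ + 1_n yᵀ, ΔΔᵀ⟩ + β‖(UΔᵀ + ΔUᵀ)1_n‖² + 2β⟨UUᵀ1_n − 1_n, ΔΔᵀ1_n⟩. Let U* ∈ ℝ^{n×r} satisfy U*(U*)ᵀ1_n = 1_n and ‖U*‖_op ≤ 1. Then for every U with ‖U − U*‖_F ≤ 1 and every Δ ∈ ℝ^{n×r}, |H_U(Δ) − H_{U*}(Δ)| ≤ 18 β n ‖U − U*‖_F ‖Δ‖_F². -/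

import Mathlib

open Matrix Finset

/-- The all-ones vector in `ℝ^n`. -/
noncomputable def ones (n : ℕ) : Fin n → ℝ := fun _ => 1

/-- Frobenius norm of a real matrix. -/
noncomputable def frob {n r : ℕ} (M : Matrix (Fin n) (Fin r) ℝ) : ℝ :=
  Real.sqrt (∑ i, ∑ j, (M i j) ^ 2)

/-- The `ℓ²→ℓ²` operator (spectral) norm of a real matrix. -/
noncomputable def opNorm {m n : ℕ} (M : Matrix (Fin m) (Fin n) ℝ) : ℝ :=
  ‖LinearMap.toContinuousLinearMap (Matrix.toEuclideanLin (𝕜 := ℝ) M)‖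

/-- The Hessian quadratic form of the augmented Lagrangian at `U`:
`H_U(Δ) = ⟨2(L·I + A) + y1ᵀ + 1yᵀ, ΔΔᵀ⟩ + β‖(UΔᵀ + ΔUᵀ)1‖² + 2β⟨UUᵀ1 − 1, ΔΔᵀ1⟩`. -/
noncomputable def hessForm {n r : ℕ} (A : Matrix (Fin n) (Fin n) ℝ) (y : Fin n → ℝ)
    (L β : ℝ) (U Δ : Matrix (Fin n) (Fin r) ℝ) : ℝ :=
  (∑ i, ∑ j, ((2 : ℝ) • (L • (1 : Matrix (Fin n) (Fin n) ℝ) + A)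
      + Matrix.vecMulVec y (ones n) + Matrix.vecMulVec (ones n) y) i j * (Δ * Δᵀ) i j)
    + β * ∑ i, (((U * Δᵀ + Δ * Uᵀ).mulVec (ones n)) i) ^ 2
    + 2 * β * dotProduct ((U * Uᵀ).mulVec (ones n) - ones n) ((Δ * Δᵀ).mulVec (ones n))


noncomputable def nrm {n : ℕ} (v : Fin n → ℝ) : ℝ := Real.sqrt (∑ i, v i ^ 2)

lemma nrm_nonneg {n : ℕ} (v : Fin n → ℝ) : 0 ≤ nrm v := Real.sqrt_nonneg _

lemma sq_nrm {n : ℕ} (v : Fin n → ℝ) : nrm v ^ 2 = ∑ i, v i ^ 2 :=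
  Real.sq_sqrt (Finset.sum_nonneg fun i _ => sq_nonneg _)

lemma nrm_eq_norm {n : ℕ} (v : Fin n → ℝ) :
    nrm v = ‖(WithLp.equiv 2 (Fin n → ℝ)).symm v‖ := by
  simp only [nrm, EuclideanSpace.norm_eq, WithLp.equiv_symm_apply, WithLp.ofLp_toLp, Real.norm_eq_abs, sq_abs]

lemma abs_dot_le {n : ℕ} (u v : Fin n → ℝ) : |dotProduct u v| ≤ nrm u * nrm v := by
  have h : dotProduct u v ^ 2 ≤ (nrm u * nrm v) ^ 2 := by
    rw [mul_pow, sq_nrm, sq_nrm]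
    exact Finset.sum_mul_sq_le_sq_mul_sq Finset.univ u v
  calc |dotProduct u v| = Real.sqrt (dotProduct u v ^ 2) := (Real.sqrt_sq_eq_abs _).symm
    _ ≤ Real.sqrt ((nrm u * nrm v) ^ 2) := Real.sqrt_le_sqrt h
    _ = nrm u * nrm v := Real.sqrt_sq (mul_nonneg (nrm_nonneg u) (nrm_nonneg v))

lemma nrm_add_le {n : ℕ} (u v : Fin n → ℝ) : nrm (u + v) ≤ nrm u + nrm v := by
  rw [nrm_eq_norm, nrm_eq_norm, nrm_eq_norm]
  have : (WithLp.equiv 2 (Fin n → ℝ)).symm (u + v)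
      = (WithLp.equiv 2 (Fin n → ℝ)).symm u + (WithLp.equiv 2 (Fin n → ℝ)).symm v := rfl
  rw [this]
  exact norm_add_le _ _

lemma nrm_mulVec_le {m k : ℕ} (M : Matrix (Fin m) (Fin k) ℝ) (w : Fin k → ℝ) :
    nrm (M *ᵥ w) ≤ frob M * nrm w := by
  have key : ∑ i, (M *ᵥ w) i ^ 2 ≤ (∑ i, ∑ j, M i j ^ 2) * ∑ j, w j ^ 2 := by
    rw [Finset.sum_mul]
    refine Finset.sum_le_sum fun i _ => ?_
    exact Finset.sum_mul_sq_le_sq_mul_sq Finset.univ (M i) w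
  calc nrm (M *ᵥ w) ≤ Real.sqrt ((∑ i, ∑ j, M i j ^ 2) * ∑ j, w j ^ 2) :=
        Real.sqrt_le_sqrt key
    _ = frob M * nrm w := by
        have h0 : 0 ≤ ∑ i, ∑ j, M i j ^ 2 := Finset.sum_nonneg fun i _ =>
          Finset.sum_nonneg fun j _ => sq_nonneg _
        rw [Real.sqrt_mul h0]; rfl

lemma frob_nonneg {m k : ℕ} (M : Matrix (Fin m) (Fin k) ℝ) : 0 ≤ frob M := Real.sqrt_nonneg _

lemma frob_transpose {m k : ℕ} (M : Matrix (Fin m) (Fin k) ℝ) : frob Mᵀ = frob M := by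
  unfold frob
  rw [Finset.sum_comm]
  rfl

lemma nrm_opNorm_mulVec_le {m k : ℕ} (M : Matrix (Fin m) (Fin k) ℝ) (w : Fin k → ℝ) :
    nrm (M *ᵥ w) ≤ opNorm M * nrm w := by
  rw [nrm_eq_norm, nrm_eq_norm]
  rw [show (WithLp.equiv 2 (Fin m → ℝ)).symm (M *ᵥ w)
    = Matrix.toEuclideanLin (𝕜 := ℝ) M ((WithLp.equiv 2 (Fin k → ℝ)).symm w) from rfl]
  have := (LinearMap.toContinuousLinearMap (Matrix.toEuclideanLin (𝕜 := ℝ) M)).le_opNorm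
    ((WithLp.equiv 2 (Fin k → ℝ)).symm w)
  simpa [opNorm] using this

/-- Local stability of the Hessian quadratic form: if
`U*(U*)ᵀ1 = 1` and `‖U*‖_op ≤ 1`, then for every `U` with `‖U − U*‖_F ≤ 1` and
every `Δ`, `|H_U(Δ) − H_{U*}(Δ)| ≤ 18βn‖U − U*‖_F‖Δ‖_F²`. -/
theorem hessian_local_stability {n r : ℕ}
    (A : Matrix (Fin n) (Fin n) ℝ) (hA : Aᵀ = A)
    (y : Fin n → ℝ) (L β : ℝ) (hβ : 0 ≤ β)
    (Ustar : Matrix (Fin n) (Fin r) ℝ)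
    (hUstar1 : (Ustar * Ustarᵀ).mulVec (ones n) = ones n)
    (hUstarOp : opNorm Ustar ≤ 1)
    (U : Matrix (Fin n) (Fin r) ℝ)
    (hclose : frob (U - Ustar) ≤ 1)
    (Δ : Matrix (Fin n) (Fin r) ℝ) :
    |hessForm A y L β U Δ - hessForm A y L β Ustar Δ| ≤
      18 * β * n * frob (U - Ustar) * frob Δ ^ 2 := by
  set e := frob (U - Ustar) with he
  set d := frob Δ with hd
  set s := Real.sqrt n with hsdef
  have hs : s ^ 2 = (n : ℝ) := Real.sq_sqrt (Nat.cast_nonneg n)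
  have hs0 : 0 ≤ s := Real.sqrt_nonneg _
  have he0 : 0 ≤ e := frob_nonneg _
  have hd0 : 0 ≤ d := frob_nonneg _
  have hop0 : 0 ≤ opNorm Ustar := norm_nonneg _
  have hones : nrm (ones n) = s := by
    simp [nrm, ones, hsdef]
  -- norm of Ustarᵀ 1 is √n
  have hUt1 : nrm (Ustarᵀ *ᵥ ones n) = s := by
    have hdp : dotProduct (Ustarᵀ *ᵥ ones n) (Ustarᵀ *ᵥ ones n) = (n : ℝ) := by
      have h2 : dotProduct (ones n) ((Ustar * Ustarᵀ) *ᵥ ones n)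
          = dotProduct (Ustarᵀ *ᵥ ones n) (Ustarᵀ *ᵥ ones n) := by
        rw [← Matrix.mulVec_mulVec, Matrix.dotProduct_mulVec, Matrix.mulVec_transpose]
      rw [← h2, hUstar1]
      simp [dotProduct, ones]
    have : ∑ j, (Ustarᵀ *ᵥ ones n) j ^ 2 = (n : ℝ) := by
      rw [← hdp]; simp [dotProduct, pow_two]
    rw [nrm, this, hsdef]
  -- basic bounds
  have hΔt : nrm (Δᵀ *ᵥ ones n) ≤ d * s := by
    have := nrm_mulVec_le Δᵀ (ones n)
    rwa [frob_transpose, hones] at this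
  have hEt : nrm ((U - Ustar)ᵀ *ᵥ ones n) ≤ e * s := by
    have := nrm_mulVec_le (U - Ustar)ᵀ (ones n)
    rwa [frob_transpose, hones] at this
  set a := (U * Δᵀ + Δ * Uᵀ) *ᵥ ones n with ha
  set b := (Ustar * Δᵀ + Δ * Ustarᵀ) *ᵥ ones n with hb
  set dv := (Δ * Δᵀ) *ᵥ ones n with hdv
  -- bound on a - b
  have hab : a - b = (U - Ustar) *ᵥ (Δᵀ *ᵥ ones n) + Δ *ᵥ ((U - Ustar)ᵀ *ᵥ ones n) := by
    rw [ha, hb, ← Matrix.sub_mulVec]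
    have hm : (U * Δᵀ + Δ * Uᵀ) - (Ustar * Δᵀ + Δ * Ustarᵀ)
        = (U - Ustar) * Δᵀ + Δ * (U - Ustar)ᵀ := by
      rw [Matrix.transpose_sub, Matrix.sub_mul, Matrix.mul_sub]; abel
    rw [hm, Matrix.add_mulVec, ← Matrix.mulVec_mulVec, ← Matrix.mulVec_mulVec]
  have h_ab : nrm (a - b) ≤ 2 * (e * d * s) := by
    rw [hab]
    refine (nrm_add_le _ _).trans ?_
    have h1 : nrm ((U - Ustar) *ᵥ (Δᵀ *ᵥ ones n)) ≤ e * (d * s) :=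
      (nrm_mulVec_le _ _).trans (mul_le_mul_of_nonneg_left hΔt he0)
    have h2 : nrm (Δ *ᵥ ((U - Ustar)ᵀ *ᵥ ones n)) ≤ d * (e * s) :=
      (nrm_mulVec_le _ _).trans (mul_le_mul_of_nonneg_left hEt hd0)
    nlinarith
  -- bound on b
  have h_b : nrm b ≤ 2 * (d * s) := by
    have hbeq : b = Ustar *ᵥ (Δᵀ *ᵥ ones n) + Δ *ᵥ (Ustarᵀ *ᵥ ones n) := by
      rw [hb, Matrix.add_mulVec, ← Matrix.mulVec_mulVec, ← Matrix.mulVec_mulVec]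
    rw [hbeq]
    refine (nrm_add_le _ _).trans ?_
    have h1 : nrm (Ustar *ᵥ (Δᵀ *ᵥ ones n)) ≤ 1 * (d * s) :=
      (nrm_opNorm_mulVec_le _ _).trans
        (mul_le_mul hUstarOp hΔt (nrm_nonneg _) one_pos.le)
    have h2 : nrm (Δ *ᵥ (Ustarᵀ *ᵥ ones n)) ≤ d * s := by
      have := nrm_mulVec_le Δ (Ustarᵀ *ᵥ ones n)
      rwa [hUt1] at this
    nlinarith
  -- bound on a
  have h_a : nrm a ≤ 4 * (d * s) := by
    have : a = b + (a - b) := by ring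
    rw [this]
    refine (nrm_add_le _ _).trans ?_
    nlinarith [mul_nonneg hd0 hs0]
  -- bound on the constraint-residual difference
  have hc : nrm ((U * Uᵀ) *ᵥ ones n - (Ustar * Ustarᵀ) *ᵥ ones n) ≤ 3 * (e * s) := by
    have hm : U * Uᵀ - Ustar * Ustarᵀ = (U - Ustar) * Uᵀ + Ustar * (U - Ustar)ᵀ := by
      rw [Matrix.transpose_sub, Matrix.sub_mul, Matrix.mul_sub]; abel
    have heq : (U * Uᵀ) *ᵥ ones n - (Ustar * Ustarᵀ) *ᵥ ones n
        = (U - Ustar) *ᵥ (Uᵀ *ᵥ ones n) + Ustar *ᵥ ((U - Ustar)ᵀ *ᵥ ones n) := by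
      rw [← Matrix.sub_mulVec, hm, Matrix.add_mulVec, ← Matrix.mulVec_mulVec,
        ← Matrix.mulVec_mulVec]
    rw [heq]
    refine (nrm_add_le _ _).trans ?_
    have hUt : nrm (Uᵀ *ᵥ ones n) ≤ e * s + s := by
      have : Uᵀ *ᵥ ones n = (U - Ustar)ᵀ *ᵥ ones n + Ustarᵀ *ᵥ ones n := by
        rw [← Matrix.add_mulVec, ← Matrix.transpose_add, sub_add_cancel]
      rw [this]
      refine (nrm_add_le _ _).trans ?_
      rw [hUt1]
      linarith
    have h1 : nrm ((U - Ustar) *ᵥ (Uᵀ *ᵥ ones n)) ≤ e * (e * s + s) :=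
      (nrm_mulVec_le _ _).trans (mul_le_mul_of_nonneg_left hUt he0)
    have h2 : nrm (Ustar *ᵥ ((U - Ustar)ᵀ *ᵥ ones n)) ≤ 1 * (e * s) :=
      (nrm_opNorm_mulVec_le _ _).trans
        (mul_le_mul hUstarOp hEt (nrm_nonneg _) one_pos.le)
    nlinarith [mul_nonneg he0 hs0]
  have hdvb : nrm dv ≤ d * (d * s) := by
    have hbeq : dv = Δ *ᵥ (Δᵀ *ᵥ ones n) := by rw [hdv, ← Matrix.mulVec_mulVec]
    rw [hbeq]
    exact (nrm_mulVec_le _ _).trans (mul_le_mul_of_nonneg_left hΔt hd0)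
  -- rewrite the difference
  have hsum : (∑ i, a i ^ 2) - (∑ i, b i ^ 2) = dotProduct (a - b) (a + b) := by
    rw [← Finset.sum_sub_distrib]
    simp only [dotProduct, Pi.sub_apply, Pi.add_apply]
    exact Finset.sum_congr rfl fun i _ => by ring
  have key : hessForm A y L β U Δ - hessForm A y L β Ustar Δ
      = β * dotProduct (a - b) (a + b)
        + 2 * β * dotProduct ((U * Uᵀ) *ᵥ ones n - (Ustar * Ustarᵀ) *ᵥ ones n) dv := by
    unfold hessForm
    have h0 : (Ustar * Ustarᵀ) *ᵥ ones n - ones n = 0 := by rw [hUstar1]; simp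
    have hsplit : (U * Uᵀ) *ᵥ ones n - ones n
        = (U * Uᵀ) *ᵥ ones n - (Ustar * Ustarᵀ) *ᵥ ones n := by rw [hUstar1]
    rw [show ((Ustar * Ustarᵀ).mulVec (ones n) - ones n) = 0 from h0, zero_dotProduct,
      show ((U * Uᵀ).mulVec (ones n) - ones n)
        = (U * Uᵀ) *ᵥ ones n - (Ustar * Ustarᵀ) *ᵥ ones n from hsplit]
    rw [← hsum]
    ring
  rw [key]
  -- final numeric estimate
  have hX : |dotProduct (a - b) (a + b)| ≤ (2 * (e * d * s)) * (6 * (d * s)) := by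
    refine (abs_dot_le _ _).trans ?_
    have hapb : nrm (a + b) ≤ 6 * (d * s) := by
      refine (nrm_add_le _ _).trans ?_
      linarith
    exact mul_le_mul h_ab hapb (nrm_nonneg _) (by positivity)
  have hY : |dotProduct ((U * Uᵀ) *ᵥ ones n - (Ustar * Ustarᵀ) *ᵥ ones n) dv|
      ≤ (3 * (e * s)) * (d * (d * s)) := by
    refine (abs_dot_le _ _).trans ?_
    exact mul_le_mul hc hdvb (nrm_nonneg _) (by positivity)
  have habs : |β * dotProduct (a - b) (a + b)
        + 2 * β * dotProduct ((U * Uᵀ) *ᵥ ones n - (Ustar * Ustarᵀ) *ᵥ ones n) dv|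
      ≤ β * |dotProduct (a - b) (a + b)|
        + 2 * β * |dotProduct ((U * Uᵀ) *ᵥ ones n - (Ustar * Ustarᵀ) *ᵥ ones n) dv| := by
    refine (abs_add_le _ _).trans ?_
    rw [abs_mul, abs_mul, abs_of_nonneg hβ, abs_of_nonneg (by linarith : (0:ℝ) ≤ 2 * β)]
  refine habs.trans ?_
  have hfinal : β * ((2 * (e * d * s)) * (6 * (d * s)))
      + 2 * β * ((3 * (e * s)) * (d * (d * s))) = 18 * β * s ^ 2 * e * d ^ 2 := by ring
  have : β * |dotProduct (a - b) (a + b)|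
        + 2 * β * |dotProduct ((U * Uᵀ) *ᵥ ones n - (Ustar * Ustarᵀ) *ᵥ ones n) dv|
      ≤ 18 * β * s ^ 2 * e * d ^ 2 := by
    rw [← hfinal]
    have := mul_le_mul_of_nonneg_left hX hβ
    have := mul_le_mul_of_nonneg_left hY (by linarith : (0:ℝ) ≤ 2 * β)
    linarith
  rw [hs] at this
  exact this
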